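/- Let D ∈ Mat_N be a nonzero trace-free anti-hermitian matrix with exactly k distinct eigenvalues, where k is even, and suppose D is similar to −D. Then the number of equivalence classes of the relation ~_D on the set of nonzero row vectors of ℂ^N equals 2^{k/2−1}·(1 + 2^{k/2}) − 1. -/

import Mathlib

open Matrix

/-- The relation `~_D` on nonzero row vectors of `ℂ^N`: `v ~_D v'` iff there are `U ∈ GL(N,ℂ)`,
`μ ∈ ℝ∖{0}` and `x ∈ ℂ∖{0}` with `D = μ U⁻¹ D U` and `v' = μ x (v U)`. Its classes are the
isomorphism classes of real calculi `(Mat_N, ⟨∂⟩_D, ℂ^N, φ)`. -/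
def simRel {N : ℕ} (D : Matrix (Fin N) (Fin N) ℂ)
    (v w : {v : Fin N → ℂ // v ≠ 0}) : Prop :=
  ∃ (U : GL (Fin N) ℂ) (μ : ℝ) (x : ℂ), μ ≠ 0 ∧ x ≠ 0 ∧
    D = (μ : ℂ) • ((U⁻¹).val * D * U.val) ∧
    (w : Fin N → ℂ) = ((μ : ℂ) * x) • Matrix.vecMul (v : Fin N → ℂ) U.val

namespace Stmt10Aux
variable {N : ℕ}
lemma GLmul_inv (U : GL (Fin N) ℂ) : U.val * (U⁻¹).val = 1 := by
  rw [← Units.val_mul, mul_inv_cancel, Units.val_one]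
lemma GLinv_mul (U : GL (Fin N) ℂ) : (U⁻¹).val * U.val = 1 := by
  rw [← Units.val_mul, inv_mul_cancel, Units.val_one]

/-- moving a nonzero vector by an invertible matrix -/
noncomputable def mvGL (P : GL (Fin N) ℂ) (v : {v : Fin N → ℂ // v ≠ 0}) : {v : Fin N → ℂ // v ≠ 0} :=
  ⟨Matrix.vecMul (v : Fin N → ℂ) P.val, by
    intro h
    apply v.2
    have h2 := congrArg (fun z => Matrix.vecMul z (P⁻¹).val) h
    simp only [Matrix.vecMul_vecMul] at h2
    rw [GLmul_inv, Matrix.vecMul_one] at h2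
    simpa using h2⟩

lemma simRel_refl (D : Matrix (Fin N) (Fin N) ℂ) (v : {v : Fin N → ℂ // v ≠ 0}) :
    simRel D v v := by
  refine ⟨1, 1, 1, one_ne_zero, one_ne_zero, ?_, ?_⟩ <;> simp

lemma simRel_symm {D : Matrix (Fin N) (Fin N) ℂ} {v w : {v : Fin N → ℂ // v ≠ 0}}
    (h : simRel D v w) : simRel D w v := by
  obtain ⟨U, μ, x, hμ, hx, hD, hw⟩ := h
  have hμc : ((μ:ℝ):ℂ) ≠ 0 := by exact_mod_cast hμ
  refine ⟨U⁻¹, μ⁻¹, (μ : ℂ) * ((μ : ℂ) * x)⁻¹, inv_ne_zero hμ,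
    mul_ne_zero hμc (inv_ne_zero (mul_ne_zero hμc hx)), ?_, ?_⟩
  · have h1 : U.val * D * (U⁻¹).val = (μ:ℂ) • D := by
      conv_lhs => rw [hD]
      rw [Matrix.mul_smul, Matrix.smul_mul]
      congr 1
      calc U.val * ((U⁻¹).val * D * U.val) * (U⁻¹).val
          = (U.val * (U⁻¹).val) * D * (U.val * (U⁻¹).val) := by
            simp only [Matrix.mul_assoc]
        _ = D := by rw [GLmul_inv]; simp
    rw [inv_inv, h1, Complex.ofReal_inv, smul_smul,
      inv_mul_cancel₀ hμc, one_smul]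
  · have hvw : (v : Fin N → ℂ) = ((μ : ℂ) * x)⁻¹ • Matrix.vecMul (w : Fin N → ℂ) (U⁻¹).val := by
      rw [hw, Matrix.smul_vecMul, Matrix.vecMul_vecMul, GLmul_inv, Matrix.vecMul_one,
        smul_smul, inv_mul_cancel₀ (mul_ne_zero hμc hx), one_smul]
    rw [hvw]
    congr 1
    push_cast
    field_simp

lemma simRel_trans {D : Matrix (Fin N) (Fin N) ℂ} {v w u : {v : Fin N → ℂ // v ≠ 0}}
    (h1 : simRel D v w) (h2 : simRel D w u) : simRel D v u := by
  obtain ⟨U, μ, x, hμ, hx, hD, hw⟩ := h1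
  obtain ⟨U', μ', x', hμ', hx', hD', hu⟩ := h2
  refine ⟨U * U', μ * μ', x * x', mul_ne_zero hμ hμ', mul_ne_zero hx hx', ?_, ?_⟩
  · have key : ((μ * μ' : ℝ):ℂ) • (((U * U')⁻¹).val * D * (U * U').val)
        = (μ':ℂ) • ((U'⁻¹).val * ((μ:ℂ) • ((U⁻¹).val * D * U.val)) * U'.val) := by
      rw [_root_.mul_inv_rev]
      push_cast
      simp only [Units.val_mul, Matrix.mul_smul, Matrix.smul_mul, smul_smul, Matrix.mul_assoc]
      ring_nf
    rw [key, ← hD, ← hD']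
  · rw [hu, hw, Matrix.smul_vecMul, Matrix.vecMul_vecMul, smul_smul, Units.val_mul]
    congr 1
    push_cast
    ring

lemma simRel_equivalence (D : Matrix (Fin N) (Fin N) ℂ) :
    Equivalence (simRel D) :=
  ⟨simRel_refl D, simRel_symm, simRel_trans⟩

lemma simRel_quot_eq {D : Matrix (Fin N) (Fin N) ℂ} {v w : {v : Fin N → ℂ // v ≠ 0}} :
    Quot.mk (simRel D) v = Quot.mk (simRel D) w ↔ simRel D v w := by
  rw [Quot.eq, (simRel_equivalence D).eqvGen_iff]


lemma simRel_conj (D : Matrix (Fin N) (Fin N) ℂ) (P : GL (Fin N) ℂ)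
    {v w : {v : Fin N → ℂ // v ≠ 0}} (h : simRel D v w) :
    simRel ((P⁻¹).val * D * P.val) (mvGL P v) (mvGL P w) := by
  obtain ⟨U, μ, x, hμ, hx, hD, hw⟩ := h
  refine ⟨P⁻¹ * U * P, μ, x, hμ, hx, ?_, ?_⟩
  · have : ((P⁻¹ * U * P)⁻¹).val = (P⁻¹).val * (U⁻¹).val * P.val := by
      simp [_root_.mul_inv_rev, Units.val_mul, Matrix.mul_assoc]
    rw [this]
    conv_lhs => rw [hD]
    simp only [Units.val_mul, Matrix.mul_smul, Matrix.smul_mul]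
    congr 1
    simp only [Matrix.mul_assoc]
    rw [← Matrix.mul_assoc (P.val) ((P⁻¹).val), GLmul_inv, Matrix.one_mul,
      ← Matrix.mul_assoc (P.val) ((P⁻¹).val), GLmul_inv, Matrix.one_mul]
  · show Matrix.vecMul (w : Fin N → ℂ) P.val = _
    rw [hw, Matrix.smul_vecMul]
    congr 1
    show Matrix.vecMul (Matrix.vecMul (v : Fin N → ℂ) U.val) P.val
        = Matrix.vecMul (Matrix.vecMul (v : Fin N → ℂ) P.val) ((P⁻¹ * U * P).val)
    simp only [Units.val_mul, Matrix.vecMul_vecMul]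
    rw [← Matrix.mul_assoc, ← Matrix.mul_assoc, GLmul_inv, Matrix.one_mul]

/-- the quotients for conjugated matrices are equivalent -/
noncomputable def quotConjEquiv (D : Matrix (Fin N) (Fin N) ℂ) (P : GL (Fin N) ℂ) :
    Quot (simRel D) ≃ Quot (simRel ((P⁻¹).val * D * P.val)) where
  toFun := Quot.map (mvGL P) (fun v w h => simRel_conj D P h)
  invFun := Quot.map (mvGL P⁻¹) (by
    intro v w h
    have h2 := simRel_conj ((P⁻¹).val * D * P.val) P⁻¹ h
    have he : ((P⁻¹)⁻¹).val * ((P⁻¹).val * D * P.val) * (P⁻¹).val = D := by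
      rw [inv_inv]
      simp only [Matrix.mul_assoc]
      rw [GLmul_inv]
      rw [← Matrix.mul_assoc P.val, GLmul_inv, Matrix.one_mul, Matrix.mul_one]
    rwa [he] at h2)
  left_inv := by
    intro q
    induction q using Quot.ind with
    | _ v =>
      show Quot.mk _ (mvGL P⁻¹ (mvGL P v)) = Quot.mk _ v
      congr 1
      apply Subtype.ext
      show Matrix.vecMul (Matrix.vecMul (v : Fin N → ℂ) P.val) (P⁻¹).val = _
      rw [Matrix.vecMul_vecMul, GLmul_inv, Matrix.vecMul_one]
  right_inv := by
    intro q
    induction q using Quot.ind with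
    | _ v =>
      show Quot.mk _ (mvGL P (mvGL P⁻¹ v)) = Quot.mk _ v
      congr 1
      apply Subtype.ext
      show Matrix.vecMul (Matrix.vecMul (v : Fin N → ℂ) (P⁻¹).val) P.val = _
      rw [Matrix.vecMul_vecMul, GLinv_mul, Matrix.vecMul_one]


/-! ### supports -/

/-- the set of "eigenvalues" in whose blocks `v` has a nonzero coordinate -/
def Phi (d : Fin N → ℂ) (v : Fin N → ℂ) : Set ℂ := d '' {j | v j ≠ 0}

lemma phi_nonempty {d : Fin N → ℂ} {v : Fin N → ℂ} (hv : v ≠ 0) : (Phi d v).Nonempty := by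
  obtain ⟨j, hj⟩ := Function.ne_iff.mp hv
  exact ⟨d j, j, hj, rfl⟩

lemma phi_subset_range (d : Fin N → ℂ) (v : Fin N → ℂ) : Phi d v ⊆ Set.range d := by
  rintro c ⟨j, _, rfl⟩; exact ⟨j, rfl⟩

lemma phi_smul (d : Fin N → ℂ) (v : Fin N → ℂ) {c : ℂ} (hc : c ≠ 0) :
    Phi d (c • v) = Phi d v := by
  unfold Phi
  congr 1
  ext j
  simp [hc]

lemma phi_sub {d₁ d₂ : Fin N → ℂ} {U : Matrix (Fin N) (Fin N) ℂ}
    (h : ∀ i j, U i j ≠ 0 → d₁ i = d₂ j) (v : Fin N → ℂ) :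
    Phi d₂ (Matrix.vecMul v U) ⊆ Phi d₁ v := by
  rintro c ⟨j, hj, rfl⟩
  have : ∃ i, v i * U i j ≠ 0 := by
    by_contra hc
    push_neg at hc
    apply hj
    show Matrix.vecMul v U j = 0
    rw [Matrix.vecMul, dotProduct]
    exact Finset.sum_eq_zero fun i _ => hc i
  obtain ⟨i, hi⟩ := this
  have hvi : v i ≠ 0 := fun h0 => hi (by rw [h0, zero_mul])
  have hUij : U i j ≠ 0 := fun h0 => hi (by rw [h0, mul_zero])
  exact ⟨i, hvi, (h i j hUij).symm ▸ rfl⟩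

lemma comm_entries {d₁ d₂ : Fin N → ℂ} {U : Matrix (Fin N) (Fin N) ℂ}
    (h : U * Matrix.diagonal d₂ = Matrix.diagonal d₁ * U) :
    ∀ i j, U i j ≠ 0 → d₁ i = d₂ j := by
  intro i j hU
  have := congrFun (congrFun h i) j
  rw [Matrix.mul_diagonal, Matrix.diagonal_mul] at this
  exact (mul_left_cancel₀ hU (by rw [this, mul_comm])).symm

lemma entries_comm {d₁ d₂ : Fin N → ℂ} {U : Matrix (Fin N) (Fin N) ℂ}
    (h : ∀ i j, U i j ≠ 0 → d₁ i = d₂ j) :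
    U * Matrix.diagonal d₂ = Matrix.diagonal d₁ * U := by
  ext i j
  rw [Matrix.mul_diagonal, Matrix.diagonal_mul]
  by_cases hU : U i j = 0
  · rw [hU, mul_zero, zero_mul]
  · rw [h i j hU, mul_comm]

/-- for an invertible block matrix, supports transform exactly -/
lemma phi_eq {d₁ d₂ : Fin N → ℂ} (U : GL (Fin N) ℂ)
    (h : U.val * Matrix.diagonal d₂ = Matrix.diagonal d₁ * U.val) (v : Fin N → ℂ) :
    Phi d₂ (Matrix.vecMul v U.val) = Phi d₁ v := by
  apply Set.Subset.antisymm (phi_sub (comm_entries h) v)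
  have hinv : (U⁻¹).val * Matrix.diagonal d₁ = Matrix.diagonal d₂ * (U⁻¹).val := by
    have h2 := congrArg (fun M => (U⁻¹).val * M * (U⁻¹).val) h
    rw [← Matrix.mul_assoc, ← Matrix.mul_assoc, GLinv_mul, Matrix.one_mul] at h2
    rw [Matrix.mul_assoc ((U⁻¹).val * Matrix.diagonal d₁), GLmul_inv, Matrix.mul_one] at h2
    exact h2.symm
  have := phi_sub (comm_entries hinv) (Matrix.vecMul v U.val)
  rwa [Matrix.vecMul_vecMul, GLmul_inv, Matrix.vecMul_one] at this

/-! ### the scaling factor must be ±1 -/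

lemma mu_pm {d : Fin N → ℂ} (hd : ∃ j, d j ≠ 0) (U : GL (Fin N) ℂ) (μ : ℝ) (hμ : μ ≠ 0)
    (h : Matrix.diagonal d = (μ : ℂ) • ((U⁻¹).val * Matrix.diagonal d * U.val)) :
    μ = 1 ∨ μ = -1 := by
  have h1 : U.val * Matrix.diagonal d = (μ:ℂ) • (Matrix.diagonal d * U.val) := by
    conv_lhs => rw [h]
    rw [Matrix.mul_smul]
    congr 1
    rw [← Matrix.mul_assoc, ← Matrix.mul_assoc, GLmul_inv, Matrix.one_mul]
  have hrow : ∀ i, ∃ j, U.val i j ≠ 0 := by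
    intro i
    by_contra hc
    push_neg at hc
    have he : Matrix.vecMul (Pi.single i (1:ℂ)) U.val = 0 := by
      funext j
      show dotProduct (Pi.single i (1:ℂ)) (fun m => U.val m j) = 0
      rw [single_dotProduct, one_mul, hc j]
    have := congrArg (fun z => Matrix.vecMul z (U⁻¹).val) he
    simp only [Matrix.vecMul_vecMul, GLmul_inv, Matrix.vecMul_one, Matrix.zero_vecMul] at this
    have h3 := congrFun this i
    rw [Pi.single_eq_same] at h3
    exact one_ne_zero h3
  have hstep : ∀ i, ∃ j, d j = (μ:ℂ) * d i := by
    intro i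
    obtain ⟨j, hj⟩ := hrow i
    have h2 := congrFun (congrFun h1 i) j
    simp only [Matrix.mul_diagonal, Matrix.smul_apply, Matrix.diagonal_mul, smul_eq_mul] at h2
    exact ⟨j, mul_left_cancel₀ hj (by rw [h2]; ring)⟩
  have hiter : ∀ n : ℕ, ∀ i : Fin N, ∃ j, d j = (μ:ℂ)^n * d i := by
    intro n
    induction n with
    | zero => intro i; exact ⟨i, by simp⟩
    | succ n ih =>
      intro i
      obtain ⟨j, hj⟩ := hstep i
      obtain ⟨m, hm⟩ := ih j
      exact ⟨m, by rw [hm, hj]; ring⟩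
  obtain ⟨j₀, hj₀⟩ := hd
  haveI : Finite ↥(Set.range d) := (Set.finite_range d).to_subtype
  have hmem : ∀ n : ℕ, (μ:ℂ)^n * d j₀ ∈ Set.range d := by
    intro n; obtain ⟨j, hj⟩ := hiter n j₀; exact ⟨j, hj⟩
  obtain ⟨a, b, hab, hfab⟩ := Finite.exists_ne_map_eq_of_infinite
    (fun n : ℕ => (⟨(μ:ℂ)^n * d j₀, hmem n⟩ : ↥(Set.range d)))
  have hpow : (μ:ℂ)^a = (μ:ℂ)^b := by
    have := congrArg Subtype.val hfab
    simpa using mul_right_cancel₀ hj₀ this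
  have habs : |μ|^a = |μ|^b := by
    have := congrArg (fun z : ℂ => ‖z‖) hpow
    simpa [norm_pow, Complex.norm_real, Real.norm_eq_abs] using this
  have h0 : 0 < |μ| := abs_pos.mpr hμ
  have habs1 : |μ| = 1 := by
    rcases lt_trichotomy (|μ|) 1 with hlt | heq | hgt
    · exfalso
      rcases hab.lt_or_gt with hl | hl
      · exact (pow_lt_pow_right_of_lt_one₀ h0 hlt hl).ne' habs
      · exact (pow_lt_pow_right_of_lt_one₀ h0 hlt hl).ne habs
    · exact heq
    · exfalso
      rcases hab.lt_or_gt with hl | hl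
      · exact (pow_lt_pow_right₀ hgt hl).ne habs
      · exact (pow_lt_pow_right₀ hgt hl).ne' habs
  rcases abs_eq (le_of_lt one_pos) |>.mp habs1 with h' | h'
  · exact Or.inl h'
  · exact Or.inr h'


/-! ### canonical representatives -/

open Classical in
/-- indicator vector of the union of blocks in `T` -/
noncomputable def KT (d : Fin N → ℂ) (T : Set ℂ) : Fin N → ℂ := fun j =>
  if d j ∈ T then 1 else 0

lemma KT_ne_zero {d : Fin N → ℂ} {T : Set ℂ} (hT : T.Nonempty) (hTS : T ⊆ Set.range d) :
    KT d T ≠ 0 := by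
  obtain ⟨c, hc⟩ := hT
  obtain ⟨j, rfl⟩ := hTS hc
  intro h
  have h2 := congrFun h j
  rw [KT] at h2
  rw [if_pos hc] at h2
  exact one_ne_zero h2

lemma phi_KT {d : Fin N → ℂ} {T : Set ℂ} (hTS : T ⊆ Set.range d) :
    Phi d (KT d T) = T := by
  have hset : {j | KT d T j ≠ 0} = {j | d j ∈ T} := by
    ext j
    simp only [Set.mem_setOf_eq, KT]
    by_cases h : d j ∈ T
    · rw [if_pos h]; simpa using h
    · rw [if_neg h]; simpa using h
  rw [Phi, hset]
  apply Set.Subset.antisymm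
  · rintro c ⟨j, hj, rfl⟩; exact hj
  · intro c hc
    obtain ⟨j, rfl⟩ := hTS hc
    exact ⟨j, hc, rfl⟩

/-- every nonzero vector can be moved to the canonical indicator vector of its
support by an invertible matrix commuting with `diagonal d` -/
lemma canon (hN : 0 < N) (d : Fin N → ℂ) (v : Fin N → ℂ) (hv : v ≠ 0) :
    ∃ U : GL (Fin N) ℂ,
      (U.val * Matrix.diagonal d = Matrix.diagonal d * U.val) ∧
      Matrix.vecMul v U.val = KT d (Phi d v) := by
  classical
  set T := Phi d v with hT
  have hpick : ∀ c ∈ T, ∃ i, d i = c ∧ v i ≠ 0 := by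
    rintro c ⟨j, hj, rfl⟩; exact ⟨j, rfl, hj⟩
  let pick : ℂ → Fin N := fun c =>
    if h : ∃ i, d i = c ∧ v i ≠ 0 then h.choose else ⟨0, hN⟩
  have hpick_d : ∀ c ∈ T, d (pick c) = c := by
    intro c hc
    have h := hpick c hc
    simp only [pick, dif_pos h]
    exact h.choose_spec.1
  have hpick_v : ∀ c ∈ T, v (pick c) ≠ 0 := by
    intro c hc
    have h := hpick c hc
    simp only [pick, dif_pos h]
    exact h.choose_spec.2
  let g : Fin N → ℂ := fun j => if d j ∈ T ∧ j = pick (d j) then (v j)⁻¹ else 1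
  let w : Fin N → ℂ := fun j =>
    if d j ∈ T ∧ j ≠ pick (d j) then (1 - v j) * (v (pick (d j)))⁻¹ else 0
  let E : Matrix (Fin N) (Fin N) ℂ := Matrix.of fun i j => if i = pick (d j) then w j else 0
  have hg : ∀ j, g j ≠ 0 := by
    intro j
    simp only [g]
    split_ifs with h
    · exact inv_ne_zero (h.2 ▸ hpick_v (d j) h.1)
    · exact one_ne_zero
  have hw0 : ∀ j, d j ∉ T → w j = 0 := by
    intro j hj; simp only [w]; rw [if_neg]; tauto
  have hwp : ∀ j, d j ∈ T → w (pick (d j)) = 0 := by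
    intro j hj
    have hd : d (pick (d j)) = d j := hpick_d (d j) hj
    show (if d (pick (d j)) ∈ T ∧ pick (d j) ≠ pick (d (pick (d j))) then
      (1 - v (pick (d j))) * (v (pick (d (pick (d j)))))⁻¹ else 0) = 0
    rw [hd]
    exact if_neg (fun h => h.2 rfl)
  have hE2 : E * E = 0 := by
    ext i j
    show (∑ m, E i m * E m j) = 0
    apply Finset.sum_eq_zero
    intro m _
    by_cases h1 : E m j = 0
    · rw [h1, mul_zero]
    · have hm : m = pick (d j) := by
        by_contra hc
        exact h1 (by simp only [E, Matrix.of_apply, if_neg hc])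
      have hwj : w j ≠ 0 := by
        intro h0
        exact h1 (by simp only [E, Matrix.of_apply, h0, ite_self])
      have hdj : d j ∈ T := by
        by_contra hc
        exact hwj (hw0 j hc)
      have : E i m = 0 := by
        simp only [E, Matrix.of_apply]
        split_ifs with h2
        · rw [hm, hwp j hdj]
        · rfl
      rw [this, zero_mul]
  have hmul1 : (1 + E) * (1 - E) = 1 := by
    have : (1 + E) * (1 - E) = 1 - E * E := by noncomm_ring
    rw [this, hE2, sub_zero]
  have hmul2 : (1 - E) * (1 + E) = 1 := by
    have : (1 - E) * (1 + E) = 1 - E * E := by noncomm_ring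
    rw [this, hE2, sub_zero]
  have hgmul : Matrix.diagonal g * Matrix.diagonal (fun j => (g j)⁻¹) = 1 := by
    rw [Matrix.diagonal_mul_diagonal]
    rw [show (fun j => g j * (g j)⁻¹) = fun _ => (1:ℂ) by
      funext j; exact mul_inv_cancel₀ (hg j)]
    exact Matrix.diagonal_one
  have hgmul' : Matrix.diagonal (fun j => (g j)⁻¹) * Matrix.diagonal g = 1 := by
    rw [Matrix.diagonal_mul_diagonal]
    rw [show (fun j => (g j)⁻¹ * g j) = fun _ => (1:ℂ) by
      funext j; exact inv_mul_cancel₀ (hg j)]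
    exact Matrix.diagonal_one
  let U : GL (Fin N) ℂ :=
    (⟨1 + E, 1 - E, hmul1, hmul2⟩ : (Matrix (Fin N) (Fin N) ℂ)ˣ) *
    (⟨Matrix.diagonal g, Matrix.diagonal (fun j => (g j)⁻¹), hgmul, hgmul'⟩ :
      (Matrix (Fin N) (Fin N) ℂ)ˣ)
  have hUval : U.val = (1 + E) * Matrix.diagonal g := rfl
  refine ⟨U, ?_, ?_⟩
  · apply entries_comm
    intro i j hU
    rw [hUval, Matrix.mul_diagonal] at hU
    have h1 : (1 + E) i j ≠ 0 := fun h0 => hU (by rw [h0, zero_mul])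
    by_cases hij : i = j
    · rw [hij]
    · have : E i j ≠ 0 := by
        intro h0
        apply h1
        show (1 : Matrix (Fin N) (Fin N) ℂ) i j + E i j = 0
        rw [h0, Matrix.one_apply_ne hij, add_zero]
      have hip : i = pick (d j) := by
        by_contra hc
        exact this (by simp only [E, Matrix.of_apply, if_neg hc])
      have hwj : w j ≠ 0 := by
        intro h0
        exact this (by simp only [E, Matrix.of_apply, h0, if_pos hip])
      have hdj : d j ∈ T := by
        by_contra hc
        exact hwj (hw0 j hc)
      rw [hip, hpick_d (d j) hdj]
  · rw [hUval, ← Matrix.vecMul_vecMul]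
    funext j
    rw [Matrix.vecMul_diagonal]
    have hvE : Matrix.vecMul v (1 + E) j = v j + v (pick (d j)) * w j := by
      rw [Matrix.vecMul_add, Matrix.vecMul_one]
      show v j + (∑ i, v i * E i j) = _
      congr 1
      rw [Finset.sum_eq_single (pick (d j))]
      · simp [E]
      · intro i _ hi
        simp only [E, Matrix.of_apply, if_neg hi, mul_zero]
      · intro h
        exact absurd (Finset.mem_univ _) h
    rw [hvE]
    by_cases hdj : d j ∈ T
    · by_cases hjp : j = pick (d j)
      · have hwj : w j = 0 := by
          have h2 := hwp j hdj
          rwa [← hjp] at h2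
        have hgj : g j = (v j)⁻¹ := by simp only [g, if_pos (And.intro hdj hjp)]
        rw [hwj, mul_zero, add_zero, hgj, KT, if_pos hdj,
          mul_inv_cancel₀ (hjp ▸ hpick_v (d j) hdj)]
      · have hwj : w j = (1 - v j) * (v (pick (d j)))⁻¹ := by
          simp only [w, if_pos (And.intro hdj hjp)]
        have hgj : g j = 1 := by
          simp only [g]; rw [if_neg]; tauto
        rw [hwj, hgj, mul_one, KT, if_pos hdj, ← mul_assoc,
          mul_comm (v (pick (d j))) (1 - v j), mul_assoc,
          mul_inv_cancel₀ (hpick_v (d j) hdj), mul_one]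
        ring
    · have hwj : w j = 0 := hw0 j hdj
      have hgj : g j = 1 := by
        simp only [g]; rw [if_neg]; tauto
      have hvj : v j = 0 := by
        by_contra hc
        exact hdj ⟨j, hc, rfl⟩
      rw [hwj, hgj, hvj, KT, if_neg hdj]
      ring


/-! ### negation of supports -/

def negSet (T : Set ℂ) : Set ℂ := (fun z => -z) '' T

lemma negSet_negSet (T : Set ℂ) : negSet (negSet T) = T := by
  unfold negSet
  rw [← Set.image_comp]
  simp

lemma phi_negd (d : Fin N → ℂ) (v : Fin N → ℂ) :
    Phi (fun j => -(d j)) v = negSet (Phi d v) := by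
  unfold Phi negSet
  rw [← Set.image_comp]
  rfl

lemma phi_flip {d : Fin N → ℂ} (U : GL (Fin N) ℂ)
    (h : -(Matrix.diagonal d) = (U⁻¹).val * Matrix.diagonal d * U.val) (v : Fin N → ℂ) :
    Phi d (Matrix.vecMul v U.val) = negSet (Phi d v) := by
  have hc : U.val * Matrix.diagonal (fun j => -(d j)) = Matrix.diagonal d * U.val := by
    have h2 := congrArg (fun M => U.val * M) h
    rw [← Matrix.mul_assoc, ← Matrix.mul_assoc, GLmul_inv, Matrix.one_mul] at h2
    rw [show Matrix.diagonal (fun j => -(d j)) = -(Matrix.diagonal d) from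
      (Matrix.diagonal_neg d).symm, h2]
  have := phi_eq U hc v
  rw [phi_negd] at this
  rw [← negSet_negSet (Phi d (Matrix.vecMul v U.val)), this]

lemma comm_to_simcond {d : Fin N → ℂ} (U : GL (Fin N) ℂ)
    (h : U.val * Matrix.diagonal d = Matrix.diagonal d * U.val) :
    Matrix.diagonal d = ((1:ℝ):ℂ) • ((U⁻¹).val * Matrix.diagonal d * U.val) := by
  have h2 := congrArg (fun M => (U⁻¹).val * M) h
  rw [← Matrix.mul_assoc, GLinv_mul, Matrix.one_mul] at h2
  rw [← Matrix.mul_assoc] at h2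
  simp only [Complex.ofReal_one, one_smul]
  rw [← h2]

/-! ### the classification -/

abbrev TySet (d : Fin N → ℂ) := {T : Set ℂ // T ⊆ Set.range d ∧ T.Nonempty}

def rT (d : Fin N → ℂ) : TySet d → TySet d → Prop :=
  fun T T' => T'.val = T.val ∨ T'.val = negSet T.val

lemma phi_simRel {d : Fin N → ℂ} (hd0 : ∃ j, d j ≠ 0)
    {v w : {v : Fin N → ℂ // v ≠ 0}} (h : simRel (Matrix.diagonal d) v w) :
    Phi d (w : Fin N → ℂ) = Phi d (v : Fin N → ℂ) ∨
      Phi d (w : Fin N → ℂ) = negSet (Phi d (v : Fin N → ℂ)) := by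
  obtain ⟨U, μ, x, hμ, hx, hD, hw⟩ := h
  have hxne : ((μ:ℝ):ℂ) * x ≠ 0 :=
    mul_ne_zero (by exact_mod_cast hμ) hx
  rcases mu_pm hd0 U μ hμ hD with h1 | h1
  · left
    rw [hw, phi_smul d _ hxne]
    apply phi_eq U
    subst h1
    simp only [Complex.ofReal_one, one_smul] at hD
    have h2 := congrArg (fun M => U.val * M) hD
    rw [← Matrix.mul_assoc, ← Matrix.mul_assoc, GLmul_inv, Matrix.one_mul] at h2
    exact h2
  · right
    rw [hw, phi_smul d _ hxne]
    apply phi_flip U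
    subst h1
    rw [Complex.ofReal_neg, Complex.ofReal_one, neg_one_smul] at hD
    conv_lhs => rw [hD]
    rw [neg_neg]

lemma simRel_canon {d : Fin N → ℂ} (hN : 0 < N) (v : {v : Fin N → ℂ // v ≠ 0}) :
    simRel (Matrix.diagonal d) v
      ⟨KT d (Phi d (v : Fin N → ℂ)),
        KT_ne_zero (phi_nonempty v.2) (phi_subset_range d _)⟩ := by
  obtain ⟨U, hcomm, hvec⟩ := canon hN d (v : Fin N → ℂ) v.2
  exact ⟨U, 1, 1, one_ne_zero, one_ne_zero, comm_to_simcond U hcomm, by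
    simp only [Complex.ofReal_one, one_mul, one_smul]
    exact hvec.symm⟩

lemma neg_range {d : Fin N → ℂ} (U₀ : GL (Fin N) ℂ)
    (h : -(Matrix.diagonal d) = (U₀⁻¹).val * Matrix.diagonal d * U₀.val) :
    ∀ c ∈ Set.range d, -c ∈ Set.range d := by
  have hc : U₀.val * Matrix.diagonal (fun j => -(d j)) = Matrix.diagonal d * U₀.val := by
    have h2 := congrArg (fun M => U₀.val * M) h
    rw [← Matrix.mul_assoc, ← Matrix.mul_assoc, GLmul_inv, Matrix.one_mul] at h2
    rw [show Matrix.diagonal (fun j => -(d j)) = -(Matrix.diagonal d) from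
      (Matrix.diagonal_neg d).symm, h2]
  have hent := comm_entries hc
  rintro c ⟨i, rfl⟩
  have hrow : ∃ j, U₀.val i j ≠ 0 := by
    by_contra hcon
    push_neg at hcon
    have he : Matrix.vecMul (Pi.single i (1:ℂ)) U₀.val = 0 := by
      funext j
      show dotProduct (Pi.single i (1:ℂ)) (fun m => U₀.val m j) = 0
      rw [single_dotProduct, one_mul, hcon j]
    have h3 := congrArg (fun z => Matrix.vecMul z (U₀⁻¹).val) he
    simp only [Matrix.vecMul_vecMul, GLmul_inv, Matrix.vecMul_one, Matrix.zero_vecMul] at h3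
    have h4 := congrFun h3 i
    rw [Pi.single_eq_same] at h4
    exact one_ne_zero h4
  obtain ⟨j, hj⟩ := hrow
  exact ⟨j, by rw [hent i j hj, neg_neg]⟩

lemma negSet_subset_range {d : Fin N → ℂ} (hneg : ∀ c ∈ Set.range d, -c ∈ Set.range d)
    {T : Set ℂ} (hTS : T ⊆ Set.range d) : negSet T ⊆ Set.range d := by
  rintro c ⟨t, ht, rfl⟩
  exact hneg t (hTS ht)

lemma simRel_flip {d : Fin N → ℂ} (hN : 0 < N)
    (U₀ : GL (Fin N) ℂ)
    (h : -(Matrix.diagonal d) = (U₀⁻¹).val * Matrix.diagonal d * U₀.val)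
    (T : Set ℂ) (hTS : T ⊆ Set.range d) (hTne : T.Nonempty) :
    simRel (Matrix.diagonal d)
      ⟨KT d T, KT_ne_zero hTne hTS⟩
      ⟨KT d (negSet T),
        KT_ne_zero (hTne.image _) (negSet_subset_range (neg_range U₀ h) hTS)⟩ := by
  set A : {v : Fin N → ℂ // v ≠ 0} := ⟨KT d T, KT_ne_zero hTne hTS⟩
  set B : {v : Fin N → ℂ // v ≠ 0} := mvGL U₀ A
  have hAB : simRel (Matrix.diagonal d) A B := by
    refine ⟨U₀, -1, -1, by norm_num, by norm_num, ?_, ?_⟩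
    · rw [Complex.ofReal_neg, Complex.ofReal_one, neg_one_smul, ← h, neg_neg]
    · show (B : Fin N → ℂ) = _
      rw [Complex.ofReal_neg, Complex.ofReal_one]
      norm_num
      rfl
  have hPhiB : Phi d (B : Fin N → ℂ) = negSet T := by
    show Phi d (Matrix.vecMul (KT d T) U₀.val) = negSet T
    rw [phi_flip U₀ h, phi_KT hTS]
  have hBC := simRel_canon (d := d) hN B
  have hCeq : (⟨KT d (Phi d (B : Fin N → ℂ)),
      KT_ne_zero (phi_nonempty B.2) (phi_subset_range d _)⟩ : {v : Fin N → ℂ // v ≠ 0})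
      = ⟨KT d (negSet T),
        KT_ne_zero (hTne.image _) (negSet_subset_range (neg_range U₀ h) hTS)⟩ := by
    apply Subtype.ext
    show KT d (Phi d (B : Fin N → ℂ)) = KT d (negSet T)
    rw [hPhiB]
  rw [hCeq] at hBC
  exact simRel_trans hAB hBC


noncomputable def classEquiv {d : Fin N → ℂ} (hN : 0 < N) (hd0 : ∃ j, d j ≠ 0)
    (U₀ : GL (Fin N) ℂ)
    (h : -(Matrix.diagonal d) = (U₀⁻¹).val * Matrix.diagonal d * U₀.val) :
    Quot (simRel (Matrix.diagonal d)) ≃ Quot (rT d) where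
  toFun := Quot.lift
    (fun v => Quot.mk (rT d)
      ⟨Phi d (v : Fin N → ℂ), phi_subset_range d _, phi_nonempty v.2⟩)
    (fun v w hvw => Quot.sound (phi_simRel hd0 hvw))
  invFun := Quot.lift
    (fun T => Quot.mk (simRel (Matrix.diagonal d))
      ⟨KT d T.val, KT_ne_zero T.2.2 T.2.1⟩)
    (by
      rintro T T' (h1 | h1)
      · have he : (⟨KT d T.val, KT_ne_zero T.2.2 T.2.1⟩ : {v : Fin N → ℂ // v ≠ 0})
            = ⟨KT d T'.val, KT_ne_zero T'.2.2 T'.2.1⟩ :=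
          Subtype.ext (congrArg (KT d) h1.symm)
        exact congrArg (Quot.mk (simRel (Matrix.diagonal d))) he
      · apply Quot.sound
        have h2 := simRel_flip hN U₀ h T.val T.2.1 T.2.2
        have he : (⟨KT d (negSet T.val), KT_ne_zero (T.2.2.image _)
              (negSet_subset_range (neg_range U₀ h) T.2.1)⟩ : {v : Fin N → ℂ // v ≠ 0})
            = ⟨KT d T'.val, KT_ne_zero T'.2.2 T'.2.1⟩ :=
          Subtype.ext (congrArg (KT d) h1.symm)
        rwa [he] at h2)
  left_inv := by
    intro q
    induction q using Quot.ind with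
    | _ v => exact Quot.sound (simRel_symm (simRel_canon hN v))
  right_inv := by
    intro q
    induction q using Quot.ind with
    | _ T =>
      show Quot.mk (rT d) ⟨Phi d (KT d T.val), phi_subset_range d _,
        phi_nonempty (KT_ne_zero T.2.2 T.2.1)⟩ = Quot.mk (rT d) T
      congr 1
      exact Subtype.ext (phi_KT T.2.1)


/-! ### counting orbits of an involution -/

lemma quot_invol_card {α : Type} [Finite α] (σ : α → α) (hσ : Function.Involutive σ) :
    2 * Nat.card (Quot (fun a b => b = a ∨ b = σ a)) =
      Nat.card α + Nat.card {a : α // σ a = a} := by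
  classical
  letI : Fintype α := Fintype.ofFinite α
  set r : α → α → Prop := fun a b => b = a ∨ b = σ a with hr
  have hequiv : Equivalence r := by
    constructor
    · intro a; exact Or.inl rfl
    · rintro a b (rfl | rfl)
      · exact Or.inl rfl
      · exact Or.inr (hσ a).symm
    · rintro a b c (rfl | rfl) h2
      · exact h2
      · rcases h2 with rfl | rfl
        · exact Or.inr rfl
        · exact Or.inl (hσ a)
  have hmkeq : ∀ a b : α, Quot.mk r a = Quot.mk r b ↔ r a b := by
    intro a b
    rw [Quot.eq, hequiv.eqvGen_iff]
  haveI : Finite (Quot r) := Finite.of_surjective (Quot.mk r) Quot.mk_surjective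
  letI : Fintype (Quot r) := Fintype.ofFinite _
  have hcard1 : Fintype.card α =
      ∑ q : Quot r, (Finset.univ.filter (fun a => Quot.mk r a = q)).card := by
    rw [← Finset.card_univ]
    exact Finset.card_eq_sum_card_fiberwise (fun a _ => Finset.mem_univ _)
  have hcard2 : (Finset.univ.filter (fun a => σ a = a)).card =
      ∑ q : Quot r, (Finset.univ.filter
        (fun a => Quot.mk r a = q ∧ σ a = a)).card := by
    have h := Finset.card_eq_sum_card_fiberwise
      (f := Quot.mk r) (s := Finset.univ.filter (fun a => σ a = a))
      (t := Finset.univ) (fun a _ => Finset.mem_univ _)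
    rw [h]
    apply Finset.sum_congr rfl
    intro q _
    congr 1
    rw [Finset.filter_filter]
    apply Finset.filter_congr
    intro a _
    tauto
  have key : ∀ q : Quot r,
      (Finset.univ.filter (fun a => Quot.mk r a = q)).card +
      (Finset.univ.filter (fun a => Quot.mk r a = q ∧ σ a = a)).card = 2 := by
    intro q
    induction q using Quot.ind with
    | _ a =>
      have hfib : Finset.univ.filter (fun b => Quot.mk r b = Quot.mk r a)
          = {a, σ a} := by
        ext b
        simp only [Finset.mem_filter, Finset.mem_univ, true_and, Finset.mem_insert,
          Finset.mem_singleton]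
        rw [hmkeq]
        constructor
        · rintro (h1 | h1)
          · exact Or.inl h1.symm
          · exact Or.inr ((congrArg σ h1).trans (hσ b)).symm
        · rintro (h1 | h1)
          · exact Or.inl h1.symm
          · exact Or.inr ((congrArg σ h1).trans (hσ a)).symm
      by_cases hfix : σ a = a
      · have h1 : Finset.univ.filter (fun b => Quot.mk r b = Quot.mk r a) = {a} := by
          rw [hfib, hfix, Finset.pair_eq_singleton]
        have h2 : Finset.univ.filter (fun b => Quot.mk r b = Quot.mk r a ∧ σ b = b)
            = {a} := by
          ext b
          simp only [Finset.mem_filter, Finset.mem_univ, true_and, Finset.mem_singleton]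
          constructor
          · rintro ⟨hb1, hb2⟩
            have : b ∈ ({a, σ a} : Finset α) := by rw [← hfib]; simp [hb1]
            rw [hfix, Finset.pair_eq_singleton, Finset.mem_singleton] at this
            exact this
          · rintro rfl
            exact ⟨rfl, hfix⟩
        rw [h1, h2, Finset.card_singleton]
      · have h1 : ({a, σ a} : Finset α).card = 2 := by
          rw [Finset.card_insert_of_notMem (by simpa using (Ne.symm hfix)),
            Finset.card_singleton]
        have h2 : Finset.univ.filter (fun b => Quot.mk r b = Quot.mk r a ∧ σ b = b)
            = ∅ := by
          ext b
          simp only [Finset.mem_filter, Finset.mem_univ, true_and, Finset.notMem_empty,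
            iff_false, not_and]
          intro hb1 hb2
          have : b ∈ ({a, σ a} : Finset α) := by rw [← hfib]; simp [hb1]
          rcases Finset.mem_insert.mp this with rfl | hb
          · exact hfix hb2
          · rw [Finset.mem_singleton] at hb
            subst hb
            exact hfix (by rw [← hb2, hσ])
        rw [hfib, h1, h2, Finset.card_empty]
  have hsum : Fintype.card α + (Finset.univ.filter (fun a => σ a = a)).card
      = 2 * Fintype.card (Quot r) := by
    rw [hcard1, hcard2, ← Finset.sum_add_distrib]
    rw [Finset.sum_congr rfl (fun q _ => key q)]
    rw [Finset.sum_const, Finset.card_univ, smul_eq_mul, mul_comm]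
  rw [Nat.card_eq_fintype_card, Nat.card_eq_fintype_card, Nat.card_eq_fintype_card]
  rw [← hsum]
  congr 1
  rw [Fintype.card_subtype]


/-! ### counting subsets -/

def subsetsEquiv (W : Set ℂ) :
    {T : Set ℂ // T ⊆ W ∧ T.Nonempty} ≃ {A : Set ↥W // A.Nonempty} where
  toFun T := ⟨{x : ↥W | (x : ℂ) ∈ T.val}, by
    obtain ⟨c, hc⟩ := T.2.2
    exact ⟨⟨c, T.2.1 hc⟩, hc⟩⟩
  invFun A := ⟨Subtype.val '' A.val, by
    constructor
    · rintro c ⟨x, _, rfl⟩; exact x.2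
    · exact A.2.image _⟩
  left_inv T := by
    apply Subtype.ext
    show Subtype.val '' {x : ↥W | (x : ℂ) ∈ T.val} = T.val
    ext c
    constructor
    · rintro ⟨x, hx, rfl⟩; exact hx
    · intro hc; exact ⟨⟨c, T.2.1 hc⟩, hc, rfl⟩
  right_inv A := by
    apply Subtype.ext
    show {x : ↥W | (x : ℂ) ∈ Subtype.val '' A.val} = A.val
    ext x
    constructor
    · rintro ⟨y, hy, hyx⟩
      rwa [show y = x from Subtype.ext hyx] at hy
    · intro hx; exact ⟨x, hx, rfl⟩

lemma card_nonempty_subsets (W : Set ℂ) (hW : W.Finite) :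
    Nat.card {T : Set ℂ // T ⊆ W ∧ T.Nonempty} = 2 ^ W.ncard - 1 := by
  classical
  haveI : Fintype ↥W := hW.fintype
  rw [Nat.card_congr (subsetsEquiv W)]
  rw [Nat.card_congr (Equiv.subtypeEquivRight
    (fun A : Set ↥W => Set.nonempty_iff_ne_empty))]
  rw [Nat.card_eq_fintype_card]
  have h1 : Fintype.card {A : Set ↥W // A ≠ ∅}
      = Fintype.card (Set ↥W) - Fintype.card {A : Set ↥W // A = ∅} :=
    Fintype.card_subtype_compl _
  rw [h1, Fintype.card_subtype_eq, Fintype.card_set]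
  congr 2
  rw [← Nat.card_coe_set_eq, Nat.card_eq_fintype_card]

lemma im_ne_zero {d : Fin N → ℂ} (him : ∀ c ∈ Set.range d, c.re = 0)
    {z : ℂ} (hz : z ∈ Set.range d) (hz0 : z ≠ 0) : z.im ≠ 0 := by
  intro h
  exact hz0 (Complex.ext (him z hz) h)

lemma ncard_split {d : Fin N → ℂ} (him : ∀ c ∈ Set.range d, c.re = 0)
    (hneg : ∀ c ∈ Set.range d, -c ∈ Set.range d) :
    (Set.range d \ {0}).ncard = 2 * (Set.range d ∩ {z | 0 < z.im}).ncard := by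
  set S := Set.range d
  have hfin : S.Finite := Set.finite_range d
  set H := S ∩ {z | 0 < z.im} with hH
  set H' := S ∩ {z | z.im < 0} with hH'
  have hunion : S \ {0} = H ∪ H' := by
    ext z
    constructor
    · rintro ⟨hz, hz0⟩
      rcases lt_trichotomy z.im 0 with h | h | h
      · exact Or.inr ⟨hz, h⟩
      · exact absurd h (im_ne_zero him hz (by simpa using hz0))
      · exact Or.inl ⟨hz, h⟩
    · rintro (⟨hz, h⟩ | ⟨hz, h⟩)
      · exact ⟨hz, by intro h0; rw [Set.mem_singleton_iff] at h0; subst h0; simp at h⟩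
      · exact ⟨hz, by intro h0; rw [Set.mem_singleton_iff] at h0; subst h0; simp at h⟩
  have hdisj : Disjoint H H' := by
    rw [Set.disjoint_left]
    rintro z ⟨_, h1⟩ ⟨_, h2⟩
    simp only [Set.mem_setOf_eq] at h1 h2
    exact absurd (lt_trans h2 h1) (lt_irrefl _)
  have hHneg : H' = negSet H := by
    ext z
    constructor
    · rintro ⟨hz, h⟩
      refine ⟨-z, ⟨hneg z hz, by simpa using h⟩, by simp⟩
    · rintro ⟨w, ⟨hw, h⟩, rfl⟩
      exact ⟨hneg w hw, by simpa using h⟩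
  have hcard : (H ∪ H').ncard = H.ncard + H'.ncard :=
    Set.ncard_union_eq hdisj (hfin.inter_of_left _) (hfin.inter_of_left _)
  have hcard2 : H'.ncard = H.ncard := by
    rw [hHneg]
    exact Set.ncard_image_of_injective H neg_injective
  rw [hunion, hcard, hcard2]
  ring

lemma card_fixed {d : Fin N → ℂ} (him : ∀ c ∈ Set.range d, c.re = 0)
    (h0 : (0:ℂ) ∉ Set.range d)
    (hneg : ∀ c ∈ Set.range d, -c ∈ Set.range d)
    (f : TySet d → TySet d) (hf : ∀ T, (f T).val = negSet T.val) :
    Nat.card {T : TySet d // f T = T} =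
      2 ^ (Set.range d ∩ {z | 0 < z.im}).ncard - 1 := by
  set S := Set.range d with hS
  set H := S ∩ {z | 0 < z.im} with hH
  have hHfin : H.Finite := (Set.finite_range d).inter_of_left _
  have hmemneg : ∀ (T : Set ℂ), ∀ z, z ∈ T → -z ∈ negSet T := by
    intro T z hz; exact ⟨z, hz, rfl⟩
  have e : {T : TySet d // f T = T} ≃ {B : Set ℂ // B ⊆ H ∧ B.Nonempty} := by
    refine ⟨?_, ?_, ?_, ?_⟩
    · rintro ⟨T, hfix⟩
      have hfix' : negSet T.val = T.val := by rw [← hf T, hfix]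
      refine ⟨T.val ∩ {z | 0 < z.im}, ⟨fun z hz => ⟨T.2.1 hz.1, hz.2⟩, ?_⟩⟩
      obtain ⟨c, hc⟩ := T.2.2
      have hcS : c ∈ S := T.2.1 hc
      rcases lt_trichotomy c.im 0 with h | h | h
      · refine ⟨-c, ?_, by simpa using h⟩
        rw [← hfix']
        exact hmemneg _ c hc
      · exact absurd h (im_ne_zero him hcS (fun h' => h0 (h' ▸ hcS)))
      · exact ⟨c, hc, h⟩
    · rintro ⟨B, hBH, hBne⟩
      refine ⟨⟨B ∪ negSet B, ?_, hBne.mono Set.subset_union_left⟩, ?_⟩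
      · intro z hz
        rcases hz with hz | hz
        · exact (hBH hz).1
        · obtain ⟨w, hw, rfl⟩ := hz
          exact hneg w (hBH hw).1
      · apply Subtype.ext
        rw [hf]
        show negSet (B ∪ negSet B) = B ∪ negSet B
        unfold negSet
        rw [Set.image_union, ← negSet, ← negSet, negSet_negSet, Set.union_comm]
    · rintro ⟨T, hfix⟩
      have hfix' : negSet T.val = T.val := by rw [← hf T, hfix]
      apply Subtype.ext
      apply Subtype.ext
      show (T.val ∩ {z | 0 < z.im}) ∪ negSet (T.val ∩ {z | 0 < z.im}) = T.val
      apply Set.Subset.antisymm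
      · rintro z (hz | hz)
        · exact hz.1
        · obtain ⟨w, hw, rfl⟩ := hz
          rw [← hfix']
          exact hmemneg _ w hw.1
      · intro z hz
        have hzS : z ∈ S := T.2.1 hz
        rcases lt_trichotomy z.im 0 with h | h | h
        · right
          refine ⟨-z, ⟨?_, by simpa using h⟩, by simp⟩
          rw [← hfix']
          exact hmemneg _ z hz
        · exact absurd h (im_ne_zero him hzS (fun h' => h0 (h' ▸ hzS)))
        · exact Or.inl ⟨hz, h⟩
    · rintro ⟨B, hBH, hBne⟩
      apply Subtype.ext
      show (B ∪ negSet B) ∩ {z | 0 < z.im} = B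
      apply Set.Subset.antisymm
      · rintro z ⟨hz1 | hz1, hz2⟩
        · exact hz1
        · obtain ⟨w, hw, rfl⟩ := hz1
          have := (hBH hw).2
          simp only [Set.mem_setOf_eq] at hz2 this
          simp at hz2
          exact absurd (lt_trans hz2 this) (lt_irrefl _)
      · intro z hz
        exact ⟨Or.inl hz, (hBH hz).2⟩
  rw [Nat.card_congr e]
  exact card_nonempty_subsets H hHfin


lemma main_diag {k : ℕ} (hN : 0 < N) (d : Fin N → ℂ) (hd0 : ∃ j, d j ≠ 0)
    (him : ∀ c ∈ Set.range d, c.re = 0)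
    (hk : (Set.range d).ncard = k) (hkeven : Even k)
    (U₀ : GL (Fin N) ℂ)
    (hU₀ : -(Matrix.diagonal d) = (U₀⁻¹).val * Matrix.diagonal d * U₀.val) :
    Nat.card (Quot (simRel (Matrix.diagonal d))) =
      2 ^ (k / 2 - 1) * (1 + 2 ^ (k / 2)) - 1 := by
  have hneg : ∀ c ∈ Set.range d, -c ∈ Set.range d := neg_range U₀ hU₀
  have hfin : (Set.range d).Finite := Set.finite_range d
  have hsplit := ncard_split him hneg
  have h0 : (0:ℂ) ∉ Set.range d := by
    intro h0
    have h1 : (Set.range d \ {0}).ncard + 1 = (Set.range d).ncard :=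
      Set.ncard_diff_singleton_add_one h0 hfin
    obtain ⟨r, hr⟩ := hkeven
    omega
  have hdiff : Set.range d \ {0} = Set.range d := Set.diff_singleton_eq_self h0
  rw [hdiff, hk] at hsplit
  set m := (Set.range d ∩ {z | 0 < z.im}).ncard with hm
  have hSne : (Set.range d).Nonempty := ⟨d hd0.choose, hd0.choose, rfl⟩
  have hkpos : 0 < k := by
    rw [← hk]
    exact (Set.ncard_pos hfin).mpr hSne
  have hm1 : 1 ≤ m := by omega
  -- the involution on TySet d
  set σT : TySet d → TySet d := fun T =>
    ⟨negSet T.val, negSet_subset_range hneg T.2.1, T.2.2.image _⟩ with hσT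
  have hσ : Function.Involutive σT := by
    intro T
    apply Subtype.ext
    exact negSet_negSet T.val
  have hrel : rT d = fun a b => b = a ∨ b = σT a := by
    funext a b
    apply propext
    constructor
    · rintro (h | h)
      · exact Or.inl (Subtype.ext h)
      · exact Or.inr (Subtype.ext h)
    · rintro (rfl | rfl)
      · exact Or.inl rfl
      · exact Or.inr rfl
  haveI : Finite (TySet d) := by
    haveI : Finite ↥(Set.range d) := hfin.to_subtype
    exact Finite.of_equiv _ (subsetsEquiv (Set.range d)).symm
  have hQ := quot_invol_card σT hσ
  rw [← hrel] at hQ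
  have hc1 : Nat.card (TySet d) = 2 ^ k - 1 := by
    rw [card_nonempty_subsets (Set.range d) hfin, hk]
  have hc2 : Nat.card {T : TySet d // σT T = T} = 2 ^ m - 1 :=
    card_fixed him h0 hneg σT (fun T => rfl)
  rw [hc1, hc2] at hQ
  have hmain : Nat.card (Quot (simRel (Matrix.diagonal d))) = Nat.card (Quot (rT d)) :=
    Nat.card_congr (classEquiv hN hd0 U₀ hU₀)
  rw [hmain]
  set Q := Nat.card (Quot (rT d))
  have hdivk : k / 2 = m := by omega
  rw [hdivk]
  have hA : 2 ^ k = 2 * 2 ^ (2 * m - 1) := by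
    conv_lhs => rw [show k = (2 * m - 1) + 1 by omega]
    rw [pow_succ]
    ring
  have hB : 2 ^ m = 2 * 2 ^ (m - 1) := by
    conv_lhs => rw [show m = (m - 1) + 1 by omega]
    rw [pow_succ]
    ring
  have hAB : 2 ^ (m - 1) * 2 ^ m = 2 ^ (2 * m - 1) := by
    rw [← pow_add]
    congr 1
    omega
  have hgoal : 2 ^ (m - 1) * (1 + 2 ^ m) = 2 ^ (m - 1) + 2 ^ (2 * m - 1) := by
    rw [Nat.mul_add, Nat.mul_one, hAB]
  rw [hgoal]
  have hA1 : 1 ≤ 2 ^ (2 * m - 1) := Nat.one_le_two_pow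
  have hB1 : 1 ≤ 2 ^ (m - 1) := Nat.one_le_two_pow
  omega

end Stmt10Aux

open Stmt10Aux

/-- If `D` is a nonzero trace-free anti-hermitian matrix with exactly `k`
distinct eigenvalues with `k` even, similar to `-D`, then `~_D` has exactly `2^{k/2-1}(1 + 2^{k/2}) - 1`
equivalence classes. -/
theorem stmt10 {N k : ℕ} (hN : 1 ≤ N) (D : Matrix (Fin N) (Fin N) ℂ)
    (hD0 : D ≠ 0) (htr : D.trace = 0) (hah : Dᴴ = -D)
    (hk : (spectrum ℂ D).ncard = k)
    (hkeven : Even k)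
    (hsim : ∃ U : GL (Fin N) ℂ, -D = (U⁻¹).val * D * U.val) :
    Nat.card (Quot (simRel D)) = 2 ^ (k / 2 - 1) * (1 + 2 ^ (k / 2)) - 1 := by
  classical
  have hN' : 0 < N := hN
  have hA : (Complex.I • D).IsHermitian := by
    show (Complex.I • D)ᴴ = Complex.I • D
    rw [Matrix.conjTranspose_smul, hah]
    rw [Complex.star_def, Complex.conj_I]
    rw [neg_smul, smul_neg, neg_neg]
  set V : Matrix (Fin N) (Fin N) ℂ :=
    (Matrix.IsHermitian.eigenvectorUnitary hA : Matrix (Fin N) (Fin N) ℂ) with hV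
  have hVmem := (Matrix.IsHermitian.eigenvectorUnitary hA).2
  have hV1 : V * star V = 1 := Matrix.mem_unitaryGroup_iff.mp hVmem
  have hV2 : star V * V = 1 := Matrix.mem_unitaryGroup_iff'.mp hVmem
  set P : GL (Fin N) ℂ := ⟨V, star V, hV1, hV2⟩ with hP
  set r : Fin N → ℝ := Matrix.IsHermitian.eigenvalues hA with hr
  have hspec : Complex.I • D = V * Matrix.diagonal (RCLike.ofReal ∘ r) * star V :=
    hA.spectral_theorem
  set d : Fin N → ℂ := fun j => -Complex.I * (RCLike.ofReal (r j) : ℂ) with hd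
  have hdiagd : Matrix.diagonal d = (-Complex.I) • Matrix.diagonal (RCLike.ofReal ∘ r) := by
    rw [← Matrix.diagonal_smul]
    congr 1
  have hDdecomp : D = V * Matrix.diagonal d * star V := by
    have h2 := congrArg (fun M => (-Complex.I) • M) hspec
    rw [smul_smul, neg_mul, Complex.I_mul_I, neg_neg, one_smul] at h2
    rw [h2, hdiagd]
    rw [Matrix.mul_smul, Matrix.smul_mul]
  have hPinv : (P⁻¹).val = star V := rfl
  have hdiag : (P⁻¹).val * D * P.val = Matrix.diagonal d := by
    rw [hPinv]
    show star V * D * V = Matrix.diagonal d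
    rw [hDdecomp]
    rw [← Matrix.mul_assoc, ← Matrix.mul_assoc, hV2, Matrix.one_mul,
      Matrix.mul_assoc, hV2, Matrix.mul_one]
  have hcard : Nat.card (Quot (simRel D)) =
      Nat.card (Quot (simRel (Matrix.diagonal d))) := by
    have e := quotConjEquiv D P
    rw [hdiag] at e
    exact Nat.card_congr e
  have hd0' : ∃ j, d j ≠ 0 := by
    by_contra hc
    push_neg at hc
    apply hD0
    have hdz : Matrix.diagonal d = 0 := by
      rw [show d = fun _ => (0:ℂ) from funext hc]
      exact Matrix.diagonal_zero
    rw [hDdecomp, hdz, Matrix.mul_zero, Matrix.zero_mul]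
  have him : ∀ c ∈ Set.range d, c.re = 0 := by
    rintro c ⟨j, rfl⟩
    show (-Complex.I * (RCLike.ofReal (r j) : ℂ)).re = 0
    simp [Complex.mul_re]
  have hkd : (Set.range d).ncard = k := by
    rw [← hk]
    congr 1
    have h1 : spectrum ℂ (Matrix.diagonal d) = Set.range d := spectrum_diagonal d
    rw [← h1]
    ext z
    rw [spectrum.mem_iff, spectrum.mem_iff]
    have hco : algebraMap ℂ (Matrix (Fin N) (Fin N) ℂ) z - Matrix.diagonal d
        = (P⁻¹).val * (algebraMap ℂ (Matrix (Fin N) (Fin N) ℂ) z - D) * P.val := by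
      rw [Matrix.mul_sub, Matrix.sub_mul, hdiag]
      congr 1
      rw [Algebra.algebraMap_eq_smul_one, Matrix.mul_smul, Matrix.smul_mul,
        Matrix.mul_one, GLinv_mul]
    rw [hco, Matrix.mul_assoc]
    rw [show ((P⁻¹).val : Matrix (Fin N) (Fin N) ℂ) = ((P⁻¹ : GL (Fin N) ℂ) :
      Matrix (Fin N) (Fin N) ℂ) from rfl]
    rw [Units.isUnit_units_mul (P⁻¹)
      ((algebraMap ℂ (Matrix (Fin N) (Fin N) ℂ) z - D) * P.val)]
    rw [Units.isUnit_mul_units _ P]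
  have hsim' : ∃ U : GL (Fin N) ℂ,
      -(Matrix.diagonal d) = (U⁻¹).val * Matrix.diagonal d * U.val := by
    obtain ⟨U, hU⟩ := hsim
    refine ⟨P⁻¹ * U * P, ?_⟩
    have hinv : ((P⁻¹ * U * P)⁻¹).val = (P⁻¹).val * (U⁻¹).val * P.val := by
      have hgr : (P⁻¹ * U * P)⁻¹ = P⁻¹ * U⁻¹ * P := by group
      rw [hgr, Units.val_mul, Units.val_mul]
    have hcan : ∀ X : Matrix (Fin N) (Fin N) ℂ, P.val * ((P⁻¹).val * X) = X := by
      intro X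
      rw [← Matrix.mul_assoc, GLmul_inv, Matrix.one_mul]
    rw [hinv, Units.val_mul, Units.val_mul, ← hdiag]
    have hneg2 : -((P⁻¹).val * D * P.val) = (P⁻¹).val * (-D) * P.val := by
      rw [Matrix.mul_neg, Matrix.neg_mul]
    rw [hneg2, hU]
    simp only [Matrix.mul_assoc]
    simp only [hcan]
  obtain ⟨U₁, hU₁⟩ := hsim'
  rw [hcard]
  exact main_diag hN' d hd0' him hkd hkeven U₁ hU₁
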